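/- For every β > 0 and every sequence γ_n with log γ_n = β√n·(√2·√n − log(√(2n))/√(2n)), one has, for each fixed x > 0: κ_n(x) := log(γ_n x)/(β√n) → ∞ and ⌊e^n⌋·(√(2π)·κ_n(x))^{−1}·exp(−κ_n(x)²/2) → (1/√(2π))·x^{−√2/β} as n → ∞. -/

import Mathlib

open Filter Real

lemma aux_sqrt_nat_atTop : Tendsto (fun n : ℕ => Real.sqrt n) atTop atTop := by
  apply tendsto_atTop_atTop.2
  intro b
  refine ⟨⌈b⌉₊ ^ 2, fun n hn => ?_⟩
  calc b ≤ (⌈b⌉₊ : ℝ) := Nat.le_ceil b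
    _ = Real.sqrt ((⌈b⌉₊ : ℝ) ^ 2) := by rw [Real.sqrt_sq (by positivity)]
    _ ≤ Real.sqrt n := Real.sqrt_le_sqrt (by exact_mod_cast hn)

lemma aux_floor_exp : Tendsto (fun n : ℕ => (⌊Real.exp n⌋ : ℝ) * Real.exp (-(n:ℝ))) atTop (nhds 1) := by
  have h1 : Tendsto (fun n : ℕ => 1 - Real.exp (-(n:ℝ))) atTop (nhds 1) := by
    have h : Tendsto (fun n : ℕ => Real.exp (-(n:ℝ))) atTop (nhds 0) :=
      Real.tendsto_exp_neg_atTop_nhds_zero.comp tendsto_natCast_atTop_atTop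
    simpa using (tendsto_const_nhds (x := (1:ℝ))).sub h
  refine tendsto_of_tendsto_of_tendsto_of_le_of_le' h1 tendsto_const_nhds ?_ ?_
  · filter_upwards with n
    have h := Int.sub_one_lt_floor (Real.exp n)
    have hpos : 0 < Real.exp (-(n:ℝ)) := Real.exp_pos _
    calc (1:ℝ) - Real.exp (-(n:ℝ)) = (Real.exp n - 1) * Real.exp (-(n:ℝ)) := by
          rw [sub_mul, ← Real.exp_add]; simp
      _ ≤ (⌊Real.exp n⌋ : ℝ) * Real.exp (-(n:ℝ)) :=
          mul_le_mul_of_nonneg_right h.le hpos.le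
  · filter_upwards with n
    calc (⌊Real.exp n⌋ : ℝ) * Real.exp (-(n:ℝ)) ≤ Real.exp n * Real.exp (-(n:ℝ)) :=
          mul_le_mul_of_nonneg_right (Int.floor_le _) (Real.exp_pos _).le
      _ = 1 := by rw [← Real.exp_add]; simp

/-- Analytic core of the stable-limit computation: if `γ_n > 0` with
`log γ_n = β√n·(√2·√n − log(√(2n))/(√2·√n))`, then for every fixed `x > 0`,
`κ_n(x) = log(γ_n x)/(β√n) → ∞` and
`⌊e^n⌋·(√(2π)·κ_n(x))⁻¹·exp(−κ_n(x)²/2) → (1/√(2π))·x^{−√2/β}`. -/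
theorem kappa_limit (β : ℝ) (hβ : 0 < β) (γ : ℕ → ℝ) (hγpos : ∀ n, 0 < γ n)
    (hγ : ∀ n : ℕ, 1 ≤ n →
      Real.log (γ n) = β * Real.sqrt n *
        (Real.sqrt 2 * Real.sqrt n
          - Real.log (Real.sqrt (2 * n)) / (Real.sqrt 2 * Real.sqrt n)))
    (x : ℝ) (hx : 0 < x) :
    Tendsto (fun n : ℕ => Real.log (γ n * x) / (β * Real.sqrt n)) atTop atTop ∧
    Tendsto (fun n : ℕ =>
        (⌊Real.exp n⌋ : ℝ) *
          (Real.sqrt (2 * Real.pi) * (Real.log (γ n * x) / (β * Real.sqrt n)))⁻¹ *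
          Real.exp (-(Real.log (γ n * x) / (β * Real.sqrt n)) ^ 2 / 2))
      atTop
      (nhds ((1 / Real.sqrt (2 * Real.pi)) * x ^ (-Real.sqrt 2 / β))) := by
  set s : ℕ → ℝ := fun n => Real.sqrt (2 * n) with hs_def
  set t : ℕ → ℝ := fun n =>
    Real.log x / (β * Real.sqrt n) - Real.log (Real.sqrt (2 * n)) / Real.sqrt (2 * n) with ht_def
  -- s → ∞
  have hs : Tendsto s atTop atTop := by
    apply tendsto_atTop_mono (fun n => ?_) aux_sqrt_nat_atTop
    exact Real.sqrt_le_sqrt (by linarith [Nat.cast_nonneg (α := ℝ) n])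
  -- t → 0
  have ht : Tendsto t atTop (nhds 0) := by
    have h1 : Tendsto (fun n : ℕ => Real.log x / (β * Real.sqrt n)) atTop (nhds 0) :=
      Tendsto.div_atTop tendsto_const_nhds (aux_sqrt_nat_atTop.const_mul_atTop hβ)
    have h2 : Tendsto (fun n : ℕ => Real.log (s n) / s n) atTop (nhds 0) :=
      (Real.isLittleO_log_id_atTop.tendsto_div_nhds_zero).comp hs
    simpa using h1.sub h2
  -- key identity for κ
  have hkey : ∀ n : ℕ, 1 ≤ n →
      Real.log (γ n * x) / (β * Real.sqrt n) = s n + t n := by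
    intro n hn
    have hn0 : 0 < Real.sqrt (n : ℝ) := Real.sqrt_pos.2 (by exact_mod_cast hn)
    have h2 : Real.sqrt (2 * (n : ℝ)) = Real.sqrt 2 * Real.sqrt n :=
      Real.sqrt_mul (by norm_num) _
    have h2pos : (0:ℝ) < Real.sqrt 2 := Real.sqrt_pos.2 (by norm_num)
    rw [Real.log_mul (hγpos n).ne' hx.ne', hγ n hn]
    simp only [hs_def, ht_def]
    obtain ⟨L, hL⟩ : ∃ L, Real.log (Real.sqrt (2 * (n:ℝ))) = L := ⟨_, rfl⟩
    rw [hL, h2]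
    field_simp
    ring
  constructor
  · exact (hs.atTop_add ht).congr'
      ((eventually_ge_atTop 1).mono fun n hn => (hkey n hn).symm)
  · -- product decomposition
    set A : ℕ → ℝ := fun n => (⌊Real.exp n⌋ : ℝ) * Real.exp (-(n:ℝ)) with hA_def
    set B : ℕ → ℝ := fun n => (1 + t n / s n)⁻¹ * (Real.sqrt (2 * Real.pi))⁻¹ with hB_def
    set C : ℕ → ℝ := fun n => Real.exp (-(t n) ^ 2 / 2) * x ^ (-Real.sqrt 2 / β) with hC_def
    have hF : ∀ n : ℕ, 1 ≤ n →
        (⌊Real.exp n⌋ : ℝ) *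
          (Real.sqrt (2 * Real.pi) * (Real.log (γ n * x) / (β * Real.sqrt n)))⁻¹ *
          Real.exp (-(Real.log (γ n * x) / (β * Real.sqrt n)) ^ 2 / 2)
        = A n * B n * C n := by
      intro n hn
      have hn0 : 0 < Real.sqrt (n : ℝ) := Real.sqrt_pos.2 (by exact_mod_cast hn)
      have hs0 : 0 < s n := Real.sqrt_pos.2 (by positivity)
      have h2 : Real.sqrt (2 * (n : ℝ)) = Real.sqrt 2 * Real.sqrt n :=
        Real.sqrt_mul (by norm_num) _
      have hsq : s n ^ 2 = 2 * (n : ℝ) := Real.sq_sqrt (by positivity)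
      have hst : s n * t n = Real.sqrt 2 / β * Real.log x - Real.log (s n) := by
        simp only [hs_def, ht_def]
        obtain ⟨L, hL⟩ : ∃ L, Real.log (Real.sqrt (2 * (n:ℝ))) = L := ⟨_, rfl⟩
        rw [hL, h2]
        field_simp
      have hexp : -(s n + t n) ^ 2 / 2
          = -(n:ℝ) + Real.log (s n) + Real.log x * (-Real.sqrt 2 / β) + (-(t n) ^ 2 / 2) := by
        have e : -(s n + t n) ^ 2 / 2
            = -(s n ^ 2) / 2 - s n * t n - (t n) ^ 2 / 2 := by ring
        rw [e, hsq, hst]; ring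
      rw [hkey n hn, hexp, Real.exp_add, Real.exp_add, Real.exp_add, Real.exp_log hs0,
        ← Real.rpow_def_of_pos hx]
      have hdiv : (1 + t n / s n) = (s n + t n) / s n := by field_simp
      simp only [hA_def, hB_def, hC_def]
      rw [hdiv, inv_div, mul_inv, div_eq_mul_inv]
      ring
    have hA : Tendsto A atTop (nhds 1) := aux_floor_exp
    have hB : Tendsto B atTop (nhds ((1:ℝ)⁻¹ * (Real.sqrt (2 * Real.pi))⁻¹)) := by
      have hts : Tendsto (fun n => t n / s n) atTop (nhds 0) := ht.div_atTop hs
      have h1 : Tendsto (fun n => 1 + t n / s n) atTop (nhds 1) := by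
        simpa using (tendsto_const_nhds (x := (1:ℝ))).add hts
      exact (h1.inv₀ one_ne_zero).mul tendsto_const_nhds
    have hC : Tendsto C atTop (nhds (1 * x ^ (-Real.sqrt 2 / β))) := by
      have h2 : Tendsto (fun n => -(t n) ^ 2 / 2) atTop (nhds 0) := by
        have := (ht.pow 2)
        simpa using (this.neg.div_const 2)
      have h3 : Tendsto (fun n => Real.exp (-(t n) ^ 2 / 2)) atTop (nhds 1) := by
        simpa [Function.comp_def] using (Real.continuous_exp.tendsto 0).comp h2
      exact h3.mul tendsto_const_nhds
    have hfinal := ((hA.mul hB).mul hC).congr'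
      ((eventually_ge_atTop 1).mono fun n hn => (hF n hn).symm)
    have hval : (1:ℝ) * ((1:ℝ)⁻¹ * (Real.sqrt (2 * Real.pi))⁻¹) * (1 * x ^ (-Real.sqrt 2 / β))
        = 1 / Real.sqrt (2 * Real.pi) * x ^ (-Real.sqrt 2 / β) := by
      simp [one_div]
    rwa [hval] at hfinal
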